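/- For nonnegative reals a and b and p ≥ 2, |a - b|·√(a^(2p-2) + b^(2p-2)) ≤ √2 · |a^p - b^p|. -/
import Mathlib


theorem stmt4 (a b p : ℝ) (ha : 0 ≤ a) (hb : 0 ≤ b) (hp : 2 ≤ p) :
    |a - b| * Real.sqrt (a ^ (2 * p - 2) + b ^ (2 * p - 2)) ≤ Real.sqrt 2 * |a ^ p - b ^ p| := by
  wlog hab : b ≤ a with H
  · have := H b a p hb ha hp (le_of_not_ge hab)
    rwa [abs_sub_comm, add_comm, abs_sub_comm (b ^ p)] at this
  have hp1 : (0:ℝ) ≤ p - 1 := by linarith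
  have hp0 : p ≠ 0 := by positivity
  have hba : b ^ (2 * p - 2) ≤ a ^ (2 * p - 2) :=
    Real.rpow_le_rpow hb hab (by linarith)
  have hbap : b ^ p ≤ a ^ p := Real.rpow_le_rpow hb hab (by linarith)
  have hbap1 : b ^ (p - 1) ≤ a ^ (p - 1) := Real.rpow_le_rpow hb hab hp1
  have hsplit_a : a ^ p = a * a ^ (p - 1) := by
    rw [show p = 1 + (p - 1) by ring, Real.rpow_add' ha (by simpa using hp0),
      Real.rpow_one]
    congr 1; ring
  have hsplit_b : b ^ p = b * b ^ (p - 1) := by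
    rw [show p = 1 + (p - 1) by ring, Real.rpow_add' hb (by simpa using hp0),
      Real.rpow_one]
    congr 1; ring
  have hsq : a ^ (2 * p - 2) = (a ^ (p - 1)) ^ (2:ℕ) := by
    rw [← Real.rpow_natCast (a ^ (p - 1)) 2, ← Real.rpow_mul ha]
    norm_num; ring_nf
  have h1 : Real.sqrt (a ^ (2 * p - 2) + b ^ (2 * p - 2)) ≤ Real.sqrt 2 * a ^ (p - 1) := by
    have : a ^ (2 * p - 2) + b ^ (2 * p - 2) ≤ 2 * (a ^ (p - 1)) ^ (2:ℕ) := by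
      rw [← hsq]; linarith
    calc Real.sqrt (a ^ (2 * p - 2) + b ^ (2 * p - 2))
        ≤ Real.sqrt (2 * (a ^ (p - 1)) ^ (2:ℕ)) := Real.sqrt_le_sqrt this
      _ = Real.sqrt 2 * a ^ (p - 1) := by
          rw [Real.sqrt_mul (by norm_num), Real.sqrt_sq (by positivity)]
  have h2 : (a - b) * a ^ (p - 1) ≤ a ^ p - b ^ p := by
    rw [hsplit_a, hsplit_b]
    nlinarith [mul_le_mul_of_nonneg_left hbap1 hb]
  rw [abs_of_nonneg (by linarith), abs_of_nonneg (by linarith)]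
  calc (a - b) * Real.sqrt (a ^ (2 * p - 2) + b ^ (2 * p - 2))
      ≤ (a - b) * (Real.sqrt 2 * a ^ (p - 1)) :=
        mul_le_mul_of_nonneg_left h1 (by linarith)
    _ = Real.sqrt 2 * ((a - b) * a ^ (p - 1)) := by ring
    _ ≤ Real.sqrt 2 * (a ^ p - b ^ p) :=
        mul_le_mul_of_nonneg_left h2 (Real.sqrt_nonneg 2)
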